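/- In the multi-parameter lower model, the probability that the random hypergraph X satisfies X̲ = Y equals (∏_{σ ∈ Y} p_σ) · (∏_{σ ∈ E(Y)} (1−p_σ)). -/

import Mathlib

open Finset

/-- In the multi-parameter lower model on `Δⁿ`, where the random hypergraph
`X` includes each simplex `σ` independently with probability `p σ`, the probability that
the maximal simplicial complex contained in `X` equals a fixed simplicial complex `Y` is
`(∏_{σ ∈ Y} p σ) · (∏_{σ ∈ E(Y)} (1 − p σ))`, where `E(Y)` is the set of minimal
simplices not in `Y`. -/
theorem lower_model_probability (n : ℕ) (p : Finset (Fin (n + 1)) → ℝ)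
    (hp : ∀ σ, 0 ≤ p σ ∧ p σ ≤ 1)
    (Δ : Finset (Finset (Fin (n + 1)))) (hΔ : Δ = univ.filter (fun σ => σ ≠ ∅))
    (Y : Finset (Finset (Fin (n + 1)))) (hYΔ : Y ⊆ Δ)
    (hYdc : ∀ σ ∈ Y, ∀ ρ : Finset (Fin (n + 1)), ρ ⊆ σ → ρ ≠ ∅ → ρ ∈ Y) :
    ∑ X ∈ Δ.powerset.filter
        (fun X => Δ.filter (fun σ => σ ∈ X ∧ ∀ ρ ∈ Δ, ρ ⊆ σ → ρ ∈ X) = Y),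
      ((∏ σ ∈ X, p σ) * ∏ σ ∈ Δ \ X, (1 - p σ)) =
    (∏ σ ∈ Y, p σ) *
      ∏ σ ∈ Δ.filter (fun σ => σ ∉ Y ∧ ∀ ρ ∈ Δ, ρ ⊂ σ → ρ ∈ Y), (1 - p σ) := by
  classical
  set E := Δ.filter (fun σ => σ ∉ Y ∧ ∀ ρ ∈ Δ, ρ ⊂ σ → ρ ∈ Y) with hE
  set R := (Δ \ Y) \ E with hR
  have hmemΔ : ∀ σ : Finset (Fin (n+1)), σ ∈ Δ ↔ σ ≠ ∅ := by
    intro σ; simp [hΔ]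
  have hEΔ : E ⊆ Δ := filter_subset _ _
  have hEY : ∀ σ ∈ E, σ ∉ Y := by
    intro σ hσ; exact (mem_filter.mp hσ).2.1
  -- minimal non-face lemma
  have hmin : ∀ σ ∈ Δ, σ ∉ Y → ∃ τ ∈ E, τ ⊆ σ := by
    intro σ hσ hσY
    have hne : (Δ.filter (fun τ => τ ⊆ σ ∧ τ ∉ Y)).Nonempty :=
      ⟨σ, by simp [mem_filter, hσ, hσY]⟩
    obtain ⟨m, hm, hmmin⟩ : ∃ m ∈ Δ.filter (fun τ => τ ⊆ σ ∧ τ ∉ Y), ∀ x ∈ Δ.filter (fun τ => τ ⊆ σ ∧ τ ∉ Y), ¬x < m := let ⟨m, hmM⟩ := Finset.exists_minimal hne; ⟨m, hmM.prop, fun x hx => hmM.not_lt hx⟩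
    simp only [mem_filter] at hm
    refine ⟨m, ?_, hm.2.1⟩
    simp only [hE, mem_filter]
    refine ⟨hm.1, hm.2.2, fun ρ hρ hρm => ?_⟩
    by_contra hρY
    exact hmmin ρ (by simp [mem_filter, hρ, hρY, hρm.subset.trans hm.2.1]) hρm
  -- characterization of the event
  have hchar : ∀ X, X ⊆ Δ →
      (Δ.filter (fun σ => σ ∈ X ∧ ∀ ρ ∈ Δ, ρ ⊆ σ → ρ ∈ X) = Y ↔
        (Y ⊆ X ∧ ∀ σ ∈ E, σ ∉ X)) := by
    intro X hX
    constructor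
    · intro h
      have hYX : Y ⊆ X := by
        intro σ hσ
        rw [← h] at hσ
        exact (mem_filter.mp hσ).2.1
      refine ⟨hYX, fun σ hσE hσX => ?_⟩
      have hσΔ : σ ∈ Δ := hEΔ hσE
      have hσY : σ ∉ Y := hEY σ hσE
      have hσfaces : ∀ ρ ∈ Δ, ρ ⊂ σ → ρ ∈ Y := (mem_filter.mp hσE).2.2
      have : σ ∈ Y := by
        rw [← h, mem_filter]
        refine ⟨hσΔ, hσX, fun ρ hρ hρσ => ?_⟩
        rcases eq_or_ssubset_of_subset hρσ with rfl | hss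
        · exact hσX
        · exact hYX (hσfaces ρ hρ hss)
      exact hσY this
    · rintro ⟨hYX, hEX⟩
      apply Finset.Subset.antisymm
      · intro σ hσ
        rw [mem_filter] at hσ
        obtain ⟨hσΔ, hσX, hfaces⟩ := hσ
        by_contra hσY
        obtain ⟨τ, hτE, hτσ⟩ := hmin σ hσΔ hσY
        exact hEX τ hτE (hfaces τ (hEΔ hτE) hτσ)
      · intro σ hσ
        rw [mem_filter]
        refine ⟨hYΔ hσ, hYX hσ, fun ρ hρ hρσ => ?_⟩
        exact hYX (hYdc σ hσ ρ hρσ ((hmemΔ ρ).mp hρ))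
  -- rewrite the index set as an image of R.powerset
  have hYR : Disjoint Y R := by
    rw [hR]
    exact Finset.disjoint_right.mpr (fun a ha => ((mem_sdiff.mp (mem_sdiff.mp ha).1).2))
  have hER : Disjoint E R := by
    rw [hR]
    exact Finset.disjoint_right.mpr (fun a ha => (mem_sdiff.mp ha).2)
  have hset : Δ.powerset.filter
      (fun X => Δ.filter (fun σ => σ ∈ X ∧ ∀ ρ ∈ Δ, ρ ⊆ σ → ρ ∈ X) = Y) =
      R.powerset.image (fun S => Y ∪ S) := by
    ext X
    simp only [mem_filter, mem_powerset, mem_image]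
    constructor
    · rintro ⟨hXΔ, h⟩
      obtain ⟨hYX, hEX⟩ := (hchar X hXΔ).mp h
      refine ⟨X \ Y, ?_, ?_⟩
      · intro σ hσ
        rw [mem_sdiff] at hσ
        rw [hR, mem_sdiff, mem_sdiff]
        exact ⟨⟨hXΔ hσ.1, hσ.2⟩, fun hσE => hEX σ hσE hσ.1⟩
      · rw [Finset.union_sdiff_of_subset hYX]
    · rintro ⟨S, hSR, rfl⟩
      have hXΔ : Y ∪ S ⊆ Δ := by
        apply Finset.union_subset hYΔ
        exact hSR.trans (by rw [hR]; exact (sdiff_subset.trans sdiff_subset))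
      refine ⟨hXΔ, (hchar _ hXΔ).mpr ⟨subset_union_left, fun σ hσE hσX => ?_⟩⟩
      rcases mem_union.mp hσX with h | h
      · exact hEY σ hσE h
      · exact (Finset.disjoint_left.mp hER hσE) (hSR h)
  rw [hset, Finset.sum_image ?hinj]
  case hinj =>
    intro S hS T hT hST
    have hS' : Disjoint Y S := hYR.mono_right (mem_powerset.mp hS)
    have hT' : Disjoint Y T := hYR.mono_right (mem_powerset.mp hT)
    have := congrArg (fun A => A \ Y) hST
    simpa [Finset.union_sdiff_of_subset, Finset.union_sdiff_left,
      Finset.sdiff_eq_self_of_disjoint hS'.symm, Finset.sdiff_eq_self_of_disjoint hT'.symm]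
      using this
  -- compute each term
  have hterm : ∀ S ∈ R.powerset,
      ((∏ σ ∈ Y ∪ S, p σ) * ∏ σ ∈ Δ \ (Y ∪ S), (1 - p σ)) =
      ((∏ σ ∈ Y, p σ) * ∏ σ ∈ E, (1 - p σ)) *
        ((∏ σ ∈ S, p σ) * ∏ σ ∈ R \ S, (1 - p σ)) := by
    intro S hS
    rw [mem_powerset] at hS
    have hYS : Disjoint Y S := hYR.mono_right hS
    have hES : Disjoint E (R \ S) := hER.mono_right sdiff_subset
    have hsdiff : Δ \ (Y ∪ S) = E ∪ (R \ S) := by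
      ext σ
      simp only [mem_sdiff, mem_union, not_or]
      constructor
      · rintro ⟨hσΔ, hσY, hσS⟩
        by_cases hσE : σ ∈ E
        · exact Or.inl hσE
        · exact Or.inr ⟨by rw [hR]; simp [mem_sdiff, hσΔ, hσY, hσE], hσS⟩
      · rintro (hσE | ⟨hσR, hσS⟩)
        · exact ⟨hEΔ hσE, hEY σ hσE, fun h => Finset.disjoint_left.mp hER hσE (hS h)⟩
        · rw [hR, mem_sdiff, mem_sdiff] at hσR
          exact ⟨hσR.1.1, hσR.1.2, hσS⟩
    rw [Finset.prod_union hYS, hsdiff, Finset.prod_union hES]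
    ring
  rw [Finset.sum_congr rfl hterm, ← Finset.mul_sum, ← Finset.prod_add]
  simp
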